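/- Let η be a prime (primitive) binary word of length k and ξ a factor of η^n with |ξ| ≥ k. Then |n − |ξ|/k − |η^n|_ξ| ≤ 1, i.e., the number of occurrences of ξ in η^n differs from n − |ξ|/k by at most 1. -/

import Mathlib

open Filter

/-- Number of occurrences of `ξ` as a factor of `w` (occurrence at position `i`
means `ξ = w_{i+1}...w_{i+|ξ|}`). -/
def occ (w ξ : List Bool) : ℕ :=
  ((List.range w.length).filter (fun i => ξ.isPrefixOf (w.drop i))).length

/-- `ℓ`-fold concatenation `η^ℓ` of the word `η`. -/
def wpow (η : List Bool) (ℓ : ℕ) : List Bool := (List.replicate ℓ η).flatten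

/-- The Kamae–Xue complexity `Σ(w) = Σ_{ξ ∈ {0,1}^+} |w|_ξ²`.  Since only
factors of `w` contribute nonzero terms, the sum is taken over the (finite) set
of nonempty sublists of `w`, which contains all factors of `w`. -/
def kxSum (w : List Bool) : ℕ :=
  ∑ ξ ∈ w.sublists.toFinset.filter (fun ξ => ξ ≠ []), (occ w ξ) ^ 2

/-- `Λ(w) = max{|η|²(ℓ+1)³ : η nonempty, ℓ ≥ 1, η^ℓ a factor of w}`. -/
noncomputable def Lam (w : List Bool) : ℕ :=
  sSup {m | ∃ η ℓ, η ≠ ([] : List Bool) ∧ 1 ≤ ℓ ∧ wpow η ℓ <:+: w ∧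
    m = η.length ^ 2 * (ℓ + 1) ^ 3}

/-- A nonempty word is prime (primitive) if it is not a proper power. -/
def IsPrimeWord (η : List Bool) : Prop :=
  η ≠ [] ∧ ∀ ζ ℓ, 2 ≤ ℓ → η ≠ wpow ζ ℓ

/-- `|v|_{ξ,m}`: occurrences of `ξ` in `v` ending in the last `m` positions. -/
def occEnd (v ξ : List Bool) (m : ℕ) : ℕ :=
  ((List.range v.length).filter
    (fun i => ξ.isPrefixOf (v.drop i) && decide (v.length < i + ξ.length + m))).length

/-- The prefix `x_1 x_2 ⋯ x_n` of the infinite sequence `x`. -/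
def pref (x : ℕ → Bool) (n : ℕ) : List Bool := (List.range n).map x


theorem wpow_length' (η : List Bool) (ℓ : ℕ) : (wpow η ℓ).length = ℓ * η.length := by
  simp [wpow, List.length_flatten]

theorem wpow_succ' (η : List Bool) (ℓ : ℕ) : wpow η (ℓ+1) = η ++ wpow η ℓ := by
  simp [wpow, List.replicate_succ]

theorem wpow_getElem' (η : List Bool) (ℓ m : ℕ) (h : m < (wpow η ℓ).length)
    (hk : 0 < η.length) :
    (wpow η ℓ)[m] = η[m % η.length]'(Nat.mod_lt _ hk) := by
  induction ℓ generalizing m with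
  | zero => simp [wpow] at h
  | succ ℓ ih =>
    rw [List.getElem_of_eq (wpow_succ' η ℓ) h]
    have h' : m < (η ++ wpow η ℓ).length := by rwa [← wpow_succ']
    rcases lt_or_ge m η.length with hm | hm
    · rw [List.getElem_append_left hm]
      congr 1
      exact (Nat.mod_eq_of_lt hm).symm
    · rw [List.getElem_append_right hm, ih]
      congr 1
      conv_rhs => rw [show m = (m - η.length) + η.length from (Nat.sub_add_cancel hm).symm]
      rw [Nat.add_mod_right]

theorem wpow_getD' (η : List Bool) (ℓ m : ℕ) (h : m < (wpow η ℓ).length) (hk : 0 < η.length) :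
    (wpow η ℓ).getD m false = η.getD (m % η.length) false := by
  rw [List.getD_eq_getElem _ _ h, List.getD_eq_getElem _ _ (Nat.mod_lt _ hk),
    wpow_getElem' _ _ _ h hk]

theorem exists_mul_mod_eq_gcd' (d k : ℕ) (hk : 0 < k) (hd : 0 < d) (hdk : d < k) :
    ∃ m : ℕ, (m * d) % k = Nat.gcd d k := by
  set a : ℤ := Nat.gcdA d k with ha
  set b : ℤ := Nat.gcdB d k with hb
  have hbez : (Nat.gcd d k : ℤ) = d * a + k * b := Nat.gcd_eq_gcd_ab d k
  have hkz : (k : ℤ) ≠ 0 := by exact_mod_cast hk.ne'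
  set a' : ℤ := a % k with ha'
  have ha'0 : 0 ≤ a' := Int.emod_nonneg a hkz
  refine ⟨a'.toNat, ?_⟩
  have hglt : Nat.gcd d k < k := lt_of_le_of_lt (Nat.gcd_le_left k hd) hdk
  have hcast : ((a'.toNat * d : ℕ) : ℤ) = a' * d := by
    push_cast [Int.toNat_of_nonneg ha'0]; ring
  have h1 : ((a'.toNat * d : ℕ) : ℤ) % (k : ℤ) = (Nat.gcd d k : ℤ) := by
    rw [hcast, ha', Int.mul_emod, Int.emod_emod_of_dvd _ dvd_rfl, ← Int.mul_emod]
    have h2 : a * d % k = (d * a + k * b) % k := by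
      rw [Int.add_mul_emod_self_left]; ring_nf
    rw [h2, ← hbez, Int.emod_eq_of_lt (by positivity) (by exact_mod_cast hglt)]
  have h3 : ((a'.toNat * d) % k : ℕ) = ((a'.toNat * d : ℕ) : ℤ) % (k : ℤ) := by push_cast; ring
  omega

theorem prime_no_shift' (η : List Bool) (hη : IsPrimeWord η) (d : ℕ)
    (hd : 0 < d) (hdk : d < η.length)
    (h : ∀ s, s < η.length → η.getD s false = η.getD ((s + d) % η.length) false) :
    False := by
  have hk : 0 < η.length := hd.trans hdk
  set k := η.length with hkdef
  have hcg : ∀ a b (ha : a < k) (hb : b < k), a = b → η[a]'ha = η[b]'hb := by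
    rintro a b ha hb rfl; rfl
  have hmul : ∀ m s, s < k → η.getD s false = η.getD ((s + m * d) % k) false := by
    intro m
    induction m with
    | zero => intro s hs; simp [Nat.mod_eq_of_lt hs]
    | succ m ih =>
      intro s hs
      rw [ih s hs, h ((s + m * d) % k) (Nat.mod_lt _ hk)]
      rw [Nat.mod_add_mod]
      congr 2
      ring
  obtain ⟨m, hm⟩ := exists_mul_mod_eq_gcd' d k hk hd hdk
  set g := Nat.gcd d k with hgdef
  have hg0 : 0 < g := Nat.gcd_pos_of_pos_left _ hd
  have hgk : g ∣ k := Nat.gcd_dvd_right d k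
  have hglt : g < k := lt_of_le_of_lt (Nat.gcd_le_left k hd) hdk
  have hg : ∀ s, s < k → η.getD s false = η.getD ((s + g) % k) false := by
    intro s hs
    rw [hmul m s hs]
    have he : (s + m * d) % k = (s + g) % k := by
      rw [Nat.add_mod, hm, Nat.mod_add_mod]
    rw [he]
  have hmod : ∀ s, s < k → η.getD s false = η.getD (s % g) false := by
    intro s
    induction s using Nat.strong_induction_on with
    | _ s ih =>
      intro hs
      rcases lt_or_ge s g with hsg | hsg
      · rw [Nat.mod_eq_of_lt hsg]
      · have h1 : η.getD (s - g) false = η.getD s false := by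
          have h2 := hg (s - g) (lt_of_le_of_lt (Nat.sub_le _ _) hs)
          rwa [Nat.sub_add_cancel hsg, Nat.mod_eq_of_lt hs] at h2
        rw [← h1, ih (s - g) (by omega) (by omega), ← Nat.mod_eq_sub_mod hsg]
  have htl : (η.take g).length = g := by
    rw [List.length_take]; omega
  have hq2 : 2 ≤ k / g := by
    obtain ⟨c, hc⟩ := hgk
    have hc2 : 2 ≤ c := by
      rcases c with _ | _ | c
      · omega
      · omega
      · omega
    rw [hc, Nat.mul_div_cancel_left _ hg0]
    exact hc2
  refine hη.2 (η.take g) (k / g) hq2 ?_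
  apply List.ext_getElem
  · rw [wpow_length', htl, Nat.div_mul_cancel hgk]
  · intro i h1 h2
    rw [wpow_getElem' _ _ _ h2 (by omega)]
    have hig : i % (η.take g).length < g := by rw [htl]; exact Nat.mod_lt _ hg0
    have step1 : (η.take g)[i % (η.take g).length]'(Nat.mod_lt _ (by omega)) =
        η[i % g]'((Nat.mod_lt i hg0).trans hglt) := by
      simp only [List.getElem_take]
      exact hcg _ _ (hig.trans hglt) ((Nat.mod_lt i hg0).trans hglt) (by rw [htl])
    rw [step1]
    have e1 : η[i]'h1 = η.getD i false := (List.getD_eq_getElem η false h1).symm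
    have e2 : η[i % g]'((Nat.mod_lt i hg0).trans hglt) = η.getD (i % g) false :=
      (List.getD_eq_getElem η false _).symm
    rw [e1, e2, hmod i h1]

theorem prefix_iff_getD' (ξ w : List Bool) (i : ℕ) (hL : 0 < ξ.length) :
    ξ <+: w.drop i ↔ i + ξ.length ≤ w.length ∧
      ∀ t < ξ.length, ξ.getD t false = w.getD (i + t) false := by
  constructor
  · intro h
    have hlen : ξ.length ≤ (w.drop i).length := h.length_le
    rw [List.length_drop] at hlen
    have hiw : i + ξ.length ≤ w.length := by omega
    refine ⟨hiw, fun t ht => ?_⟩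
    have h1 : ξ[t]'ht = (w.drop i)[t]'(by rw [List.length_drop]; omega) := h.getElem ht
    rw [List.getD_eq_getElem _ _ ht, List.getD_eq_getElem _ _ (by omega : i + t < w.length), h1,
      List.getElem_drop]
  · rintro ⟨hiw, h⟩
    rw [List.prefix_iff_eq_take]
    apply List.ext_getElem
    · rw [List.length_take, List.length_drop]; omega
    · intro t h1 h2
      rw [List.getElem_take, List.getElem_drop]
      have := h t h1
      rw [List.getD_eq_getElem _ _ h1,
        List.getD_eq_getElem _ _ (by omega : i + t < w.length)] at this
      exact this

theorem occ_residue' (η : List Bool) (hη : IsPrimeWord η) (L i j : ℕ) (hL : η.length ≤ L)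
    (hres : ∀ t, t < L →
      η.getD ((i + t) % η.length) false = η.getD ((j + t) % η.length) false) :
    i % η.length = j % η.length := by
  have hk : 0 < η.length := List.length_pos_iff.mpr hη.1
  set k := η.length with hkdef
  haveI : NeZero k := ⟨hk.ne'⟩
  set F : ZMod k → Bool := fun x => η.getD x.val false with hF
  have hFc : ∀ a : ℕ, F (a : ZMod k) = η.getD (a % k) false := by
    intro a
    rw [hF]
    simp only [ZMod.val_natCast]
  have h' : ∀ x : ZMod k, F x = F (x + ((j : ZMod k) - i)) := by
    intro x
    have ht : (x - (i : ZMod k)).val < L := lt_of_lt_of_le (ZMod.val_lt _) hL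
    have hcast : ((x - (i : ZMod k)).val : ZMod k) = x - i := ZMod.natCast_rightInverse _
    have h2 := hres (x - (i : ZMod k)).val ht
    rw [← hFc, ← hFc] at h2
    push_cast [hcast] at h2
    have e3 : (i : ZMod k) + (x - ↑i) = x := by ring
    have e4 : (j : ZMod k) + (x - ↑i) = x + ((j : ZMod k) - ↑i) := by ring
    rw [e3, e4] at h2
    exact h2
  by_contra hne
  have hδ : ((j : ZMod k) - i) ≠ 0 := by
    intro h0
    apply hne
    have : (i : ZMod k) = (j : ZMod k) := by
      have := sub_eq_zero.mp h0
      exact this.symm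
    exact (ZMod.natCast_eq_natCast_iff' i j k).mp this
  set δ := (j : ZMod k) - i with hδdef
  have hd0 : 0 < δ.val := ZMod.val_pos.mpr hδ
  have hdk : δ.val < k := ZMod.val_lt _
  refine prime_no_shift' η hη δ.val hd0 hdk ?_
  intro s hs
  have e1 : η.getD s false = F (s : ZMod k) := by
    rw [hFc, Nat.mod_eq_of_lt hs]
  have e2 : η.getD ((s + δ.val) % k) false = F ((s : ZMod k) + δ) := by
    rw [← hFc, Nat.cast_add, ZMod.natCast_rightInverse _]
  rw [e1, e2]
  exact h' _

/-- if `η` is prime of length `k` and `ξ` is a factor of `η^n`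
with `|ξ| ≥ k`, then `|n − |ξ|/k − |η^n|_ξ| ≤ 1`. -/
theorem occ_in_pow_approx (η ξ : List Bool) (n : ℕ)
    (hη : IsPrimeWord η) (hlen : η.length ≤ ξ.length) (hξ : ξ <:+: wpow η n) :
    |(n : ℝ) - (ξ.length : ℝ) / (η.length : ℝ) - (occ (wpow η n) ξ : ℝ)| ≤ 1 := by
  have hk : 0 < η.length := List.length_pos_iff.mpr hη.1
  set k := η.length with hkdef
  set L := ξ.length with hLdef
  have hL0 : 0 < L := lt_of_lt_of_le hk hlen
  set N := n * k with hNdef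
  have hNlen : (wpow η n).length = N := wpow_length' η n
  -- occurrence i₀
  obtain ⟨s, t, hst⟩ := hξ
  have hi₀ : ξ <+: (wpow η n).drop s.length := by
    rw [← hst, show s ++ ξ ++ t = s ++ (ξ ++ t) by simp, List.drop_left]
    exact List.prefix_append ξ t
  set i₀ := s.length with hi₀def
  rw [prefix_iff_getD' _ _ _ hL0, hNlen] at hi₀
  obtain ⟨hi₀N, hi₀val⟩ := hi₀
  set p := i₀ % k with hpdef
  have hp : p < k := Nat.mod_lt _ hk
  have hpN : p + L ≤ N := le_trans (by have := Nat.mod_le i₀ k; omega) hi₀N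
  clear_value N p
  -- characterization of occurrences
  have hchar : ∀ i, ξ.isPrefixOf ((wpow η n).drop i) = true ↔ (i + L ≤ N ∧ i % k = p) := by
    intro i
    rw [List.isPrefixOf_iff_prefix, prefix_iff_getD' _ _ _ hL0, hNlen]
    constructor
    · rintro ⟨hiN, hival⟩
      refine ⟨hiN, ?_⟩
      rw [hpdef]
      refine occ_residue' η hη L i i₀ hlen (fun u hu => ?_)
      rw [← wpow_getD' η n (i + u) (by rw [hNlen]; omega) hk,
        ← wpow_getD' η n (i₀ + u) (by rw [hNlen]; omega) hk,
        ← hival u hu, ← hi₀val u hu]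
    · rintro ⟨hiN, hip⟩
      refine ⟨hiN, fun u hu => ?_⟩
      rw [hi₀val u hu, wpow_getD' η n (i + u) (by rw [hNlen]; omega) hk,
        wpow_getD' η n (i₀ + u) (by rw [hNlen]; omega) hk]
      congr 1
      have : i ≡ i₀ [MOD k] := by
        unfold Nat.ModEq
        omega
      exact (Nat.ModEq.add_right u this).symm
  -- rewrite occ as a Finset count
  have hocc : occ (wpow η n) ξ =
      ((Finset.range N).filter (fun i => i + L ≤ N ∧ i % k = p)).card := by
    unfold occ
    rw [hNlen]
    have hfc : (List.range N).filter (fun i => ξ.isPrefixOf ((wpow η n).drop i)) =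
        (List.range N).filter (fun i => decide (i + L ≤ N ∧ i % k = p)) := by
      apply List.filter_congr
      intro i _
      have := hchar i
      by_cases hb : ξ.isPrefixOf ((wpow η n).drop i) = true
      · rw [hb, Eq.comm, decide_eq_true_eq]
        exact this.mp hb
      · have hb' : ξ.isPrefixOf ((wpow η n).drop i) = false := by
          revert hb; cases ξ.isPrefixOf ((wpow η n).drop i) <;> simp
        rw [hb', Eq.comm, decide_eq_false_iff_not]
        intro hcon
        exact hb (this.mpr hcon)
    rw [hfc]
    rfl
  -- count the arithmetic progression
  have hcount : ((Finset.range N).filter (fun i => i + L ≤ N ∧ i % k = p)).card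
      = (N - L - p) / k + 1 := by
    set q := (N - L - p) / k with hq
    have himg : (Finset.range (q + 1)).image (fun j => p + k * j)
        = (Finset.range N).filter (fun i => i + L ≤ N ∧ i % k = p) := by
      ext i
      simp only [Finset.mem_image, Finset.mem_filter, Finset.mem_range]
      constructor
      · rintro ⟨j, hj, rfl⟩
        have hj' : j ≤ q := by omega
        have h1 : k * j ≤ k * q := Nat.mul_le_mul_left k hj'
        have h2 : q * k ≤ N - L - p := Nat.div_mul_le_self _ _
        have h2' : k * q = q * k := Nat.mul_comm _ _
        have h3 : (p + k * j) % k = p := by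
          rw [Nat.add_mul_mod_self_left, Nat.mod_eq_of_lt hp]
        refine ⟨by omega, by omega, h3⟩
      · rintro ⟨hiN, hiL, hip⟩
        refine ⟨i / k, ?_, ?_⟩
        · have h4 := Nat.div_add_mod i k
          have hc : i / k * k = k * (i / k) := Nat.mul_comm _ _
          have h5 : i / k ≤ q := by
            rw [hq, Nat.le_div_iff_mul_le hk]
            omega
          omega
        · have h4 := Nat.div_add_mod i k
          omega
    rw [← himg, Finset.card_image_of_injective _
      (fun a b hab => Nat.eq_of_mul_eq_mul_left hk (by omega)), Finset.card_range]
  rw [hocc, hcount]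
  -- final real arithmetic
  set q := (N - L - p) / k with hq
  set r := (N - L - p) % k with hr
  have hqr : k * q + r = N - L - p := Nat.div_add_mod _ _
  have hrk : r < k := Nat.mod_lt _ hk
  clear_value q r
  have hNk : (N : ℝ) = (n : ℝ) * k := by rw [hNdef]; push_cast; ring
  have hcast : (k : ℝ) * q + r = (n : ℝ) * k - L - p := by
    have h6 : k * q + r + L + p = N := by omega
    have := congrArg (fun x : ℕ => (x : ℝ)) h6
    push_cast at this
    linarith [hNk]
  have hk0 : (0 : ℝ) < k := by exact_mod_cast hk
  have key : (n : ℝ) - (L : ℝ) / k - ((q + 1 : ℕ) : ℝ) = ((p : ℝ) + r - k) / k := by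
    have hL' : (L : ℝ) = (n : ℝ) * k - p - k * q - r := by linarith [hcast]
    rw [eq_div_iff hk0.ne']
    push_cast
    rw [hL']
    field_simp
    ring
  rw [key, abs_le]
  have hpR : (p : ℝ) < k := by exact_mod_cast hp
  have hrR : (r : ℝ) < k := by exact_mod_cast hrk
  have hp0 : (0 : ℝ) ≤ p := Nat.cast_nonneg _
  have hr0 : (0 : ℝ) ≤ r := Nat.cast_nonneg _
  constructor
  · rw [le_div_iff₀ hk0]
    linarith
  · rw [div_le_iff₀ hk0]
    linarith
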